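/- Let S be a finite set with probability distribution p, let ĉ : S → ℝ be immediate costs with expectation c̄ = ∑_s p(s)·ĉ(s), let c : S → ℝ satisfy ∑_s p(s)·c(s) = (c_min - c̄)/γ for reals c_min and γ > 0, and let Δ_act < c_min. For each s with p(s) > 0 define Δ'(s) = c(s) - (c_min - Δ_act)/(p(s)·γ). Then ∑_{s : p(s)>0} p(s)·(ĉ(s) + γ·Δ'(s)) = c_min - k·(c_min - Δ_act) ≤ Δ_act, where k is the number of states s with p(s) > 0 (assume k ≥ 1). -/

import Mathlib

theorem stmt_7 {S : Type*} [Fintype S] (p chat c : S → ℝ) (γ c_min Δ_act c_bar : ℝ)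
    (hγ : 0 < γ) (hp0 : ∀ s, 0 ≤ p s) (hp1 : ∑ s, p s = 1)
    (hcbar : c_bar = ∑ s, p s * chat s)
    (hc : ∑ s, p s * c s = (c_min - c_bar) / γ)
    (hΔ : Δ_act < c_min)
    (Δ' : S → ℝ) (hΔ' : ∀ s, 0 < p s → Δ' s = c s - (c_min - Δ_act) / (p s * γ))
    (k : ℕ) (hk : k = (Finset.univ.filter (fun s => 0 < p s)).card) (hk1 : 1 ≤ k) :
    (∑ s ∈ Finset.univ.filter (fun s => 0 < p s), p s * (chat s + γ * Δ' s))
        = c_min - (k : ℝ) * (c_min - Δ_act) ∧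
      c_min - (k : ℝ) * (c_min - Δ_act) ≤ Δ_act := by
  set F := Finset.univ.filter (fun s => 0 < p s) with hF
  have hzero : ∀ s ∉ F, p s = 0 := by
    intro s hs
    simp only [hF, Finset.mem_filter, Finset.mem_univ, true_and, not_lt] at hs
    linarith [hp0 s]
  have hsumF : ∀ f : S → ℝ, ∑ s ∈ F, p s * f s = ∑ s, p s * f s := by
    intro f
    refine Finset.sum_subset (Finset.subset_univ _) ?_
    intro s _ hs
    rw [hzero s hs]; ring
  have key : ∑ s ∈ F, p s * (chat s + γ * Δ' s) = c_min - (k : ℝ) * (c_min - Δ_act) := by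
    have hterm : ∀ s ∈ F, p s * (chat s + γ * Δ' s)
        = p s * chat s + γ * (p s * c s) - (c_min - Δ_act) := by
      intro s hs
      simp only [hF, Finset.mem_filter, Finset.mem_univ, true_and] at hs
      rw [hΔ' s hs]
      have hne : p s * γ ≠ 0 := by positivity
      field_simp
      ring
    rw [Finset.sum_congr rfl hterm]
    rw [Finset.sum_sub_distrib, Finset.sum_add_distrib, ← Finset.mul_sum,
      hsumF chat, hsumF c, hc, Finset.sum_const, hk, ← hcbar]
    field_simp
    rw [nsmul_eq_mul]; ring
  refine ⟨key, ?_⟩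
  have hk' : (1 : ℝ) ≤ (k : ℝ) := by exact_mod_cast hk1
  nlinarith [mul_le_mul_of_nonneg_right hk' (by linarith : (0:ℝ) ≤ c_min - Δ_act)]
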